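/- In the solitonic limit, the function v(φ) = 3C·sech²(√C φ/(2Q)) − C − R satisfies Q²(v_φ)² + (1/3)v³ + Rv² + (6R² − 5/3)v + 5R − 18R³ − (5/3)z = 0 for all φ, provided C² = 5/3 − 5R² (i.e., 3C² + 15R² − 5 = 0), C > 0, and C³ + (15R² − 5)C + 70R³ − 20R + 5z = 0, Q ≠ 0. -/

import Mathlib

/-- the solitonic ansatz `v(φ) = 3C·sech²(√C φ/(2Q)) − C − R`
solves `Q²(v_φ)² + (1/3)v³ + Rv² + (6R²−5/3)v + 5R − 18R³ − (5/3)z = 0`,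
provided `3C² + 15R² − 5 = 0`, `C > 0`,
`C³ + (15R²−5)C + 70R³ − 20R + 5z = 0` and `Q ≠ 0`. -/
theorem soliton_ansatz_solves_first_order_equation
    (C R z Q : ℝ) (hQ : Q ≠ 0) (hC : C > 0)
    (h3 : 3 * C ^ 2 + 15 * R ^ 2 - 5 = 0)
    (h4 : C ^ 3 + (15 * R ^ 2 - 5) * C + 70 * R ^ 3 - 20 * R + 5 * z = 0) :
    ∀ φ : ℝ,
      Q ^ 2 * (deriv (fun t =>
            3 * C * (1 / Real.cosh (Real.sqrt C * t / (2 * Q))) ^ 2 - C - R) φ) ^ 2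
        + 1/3 * (3 * C * (1 / Real.cosh (Real.sqrt C * φ / (2 * Q))) ^ 2 - C - R) ^ 3
        + R * (3 * C * (1 / Real.cosh (Real.sqrt C * φ / (2 * Q))) ^ 2 - C - R) ^ 2
        + (6 * R ^ 2 - 5/3) *
            (3 * C * (1 / Real.cosh (Real.sqrt C * φ / (2 * Q))) ^ 2 - C - R)
        + 5 * R - 18 * R ^ 3 - 5/3 * z = 0 := by
  intro φ
  set k : ℝ := Real.sqrt C / (2 * Q) with hkdef
  have hk : 4 * k ^ 2 * Q ^ 2 = C := by
    rw [hkdef]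
    field_simp
    rw [Real.sq_sqrt hC.le]
    ring
  set c : ℝ := Real.cosh (k * φ) with hcdef
  set S : ℝ := Real.sinh (k * φ) with hSdef
  have hc0 : c ≠ 0 := ne_of_gt (Real.cosh_pos _)
  have hs : S ^ 2 = c ^ 2 - 1 := by
    rw [hSdef, hcdef]
    have := Real.cosh_sq (k * φ)
    linarith
  -- rewrite argument
  clear_value k c S
  have harg : ∀ t : ℝ, Real.sqrt C * t / (2 * Q) = k * t := by
    intro t; rw [hkdef]; field_simp
  have hc0' : Real.cosh (k * φ) ≠ 0 := by rw [← hcdef]; exact hc0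
  have hD : HasDerivAt (fun t =>
      3 * C * (1 / Real.cosh (Real.sqrt C * t / (2 * Q))) ^ 2 - C - R)
      (-(6 * C * k * Real.sinh (k * φ)) / (Real.cosh (k * φ)) ^ 3) φ := by
    have h1 : HasDerivAt (fun t : ℝ => k * t) k φ := by
      simpa using (hasDerivAt_id φ).const_mul k
    have h2 : HasDerivAt (fun t : ℝ => Real.cosh (k * t))
        (Real.sinh (k * φ) * k) φ := by
      exact (Real.hasDerivAt_cosh (k * φ)).comp φ h1
    have h3' : HasDerivAt (fun t : ℝ => (Real.cosh (k * t))⁻¹)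
        (-(Real.sinh (k * φ) * k) / (Real.cosh (k * φ)) ^ 2) φ := h2.inv hc0'
    have h4' : HasDerivAt (fun t : ℝ =>
        3 * C * ((Real.cosh (k * t))⁻¹) ^ 2 - C - R)
        (3 * C * (2 * (Real.cosh (k * φ))⁻¹ *
          (-(Real.sinh (k * φ) * k) / (Real.cosh (k * φ)) ^ 2))) φ := by
      have := (h3'.pow 2).const_mul (3 * C)
      simpa using (this.sub_const C).sub_const R
    have heq : (fun t : ℝ => 3 * C * ((Real.cosh (k * t))⁻¹) ^ 2 - C - R)
        = (fun t => 3 * C * (1 / Real.cosh (Real.sqrt C * t / (2 * Q))) ^ 2 - C - R) := by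
      funext t; rw [harg t]; rw [one_div]
    rw [heq] at h4'
    convert h4' using 1
    field_simp [hc0']
    ring
  rw [harg φ, hD.deriv, one_div, ← hcdef, ← hSdef]
  have key : Q ^ 2 * (-(6 * C * k * S) / c ^ 3) ^ 2
      = 9 * C ^ 3 * ((c)⁻¹ ^ 2) ^ 2 - 9 * C ^ 3 * ((c)⁻¹ ^ 2) ^ 3 := by
    field_simp
    linear_combination (9 * S ^ 2) * hk + (9 * C) * hs
  rw [key]
  set s : ℝ := (c)⁻¹ ^ 2 with hsdef
  linear_combination (C * s) * h3 - (1/3) * h4
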